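/- With the notation above (M₁ = μB⁻¹DBE, M₂ = μEB⁻¹DB, μ⁶ = λ, D = diag(1ₓ, ρ²1_y, ρ1_z) with ρ a primitive cube root of unity, E = diag(1ₐ, −1_b)), the central element satisfies (M₁M₂)³ = λ·1ₙ, i.e., the representation sends (σ₁σ₂)³ to the scalar λ. -/

import Mathlib

open Matrix

set_option maxHeartbeats 1000000

/-- With `M₁ = μ·B⁻¹DBE`, `M₂ = μ·E·B⁻¹DB`, `μ⁶ = λ`, the central element satisfies
`(M₁M₂)³ = λ·1ₙ`. -/
theorem stmt3 (a b x y z : ℕ) (hn : a + b = x + y + z)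
    (ρ : ℂ) (hρ : IsPrimitiveRoot ρ 3)
    (lam μ : ℂ) (hlam : lam ≠ 0) (hμ : μ ^ 6 = lam)
    (B : Matrix (Fin (a + b)) (Fin (a + b)) ℂ) (hB : IsUnit B) :
    let D : Matrix (Fin (a + b)) (Fin (a + b)) ℂ :=
      Matrix.diagonal fun i => if (i : ℕ) < x then 1 else if (i : ℕ) < x + y then ρ ^ 2 else ρ
    let E : Matrix (Fin (a + b)) (Fin (a + b)) ℂ :=
      Matrix.diagonal fun i => if (i : ℕ) < a then 1 else -1
    let M₁ := μ • (B⁻¹ * D * B * E)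
    let M₂ := μ • (E * (B⁻¹ * D * B))
    (M₁ * M₂) ^ 3 = lam • (1 : Matrix (Fin (a + b)) (Fin (a + b)) ℂ) := by
  intro D E M₁ M₂
  have hdet : IsUnit B.det := (Matrix.isUnit_iff_isUnit_det B).mp hB
  have hBB : B * B⁻¹ = 1 := Matrix.mul_nonsing_inv B hdet
  have hρ3 : ρ ^ 3 = 1 := hρ.pow_eq_one
  have hEE : E * E = 1 := by
    show Matrix.diagonal _ * Matrix.diagonal _ = 1
    rw [Matrix.diagonal_mul_diagonal, ← Matrix.diagonal_one]
    exact congrArg Matrix.diagonal (funext fun i => by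
      by_cases h : (i : ℕ) < a <;> simp [h])
  have hD6 : D ^ 6 = 1 := by
    show (Matrix.diagonal _) ^ 6 = 1
    rw [Matrix.diagonal_pow, ← Matrix.diagonal_one]
    refine congrArg Matrix.diagonal (funext fun i => ?_)
    show (if (i : ℕ) < x then (1:ℂ) else if (i : ℕ) < x + y then ρ ^ 2 else ρ) ^ 6 = 1
    by_cases h1 : (i : ℕ) < x
    · simp [h1]
    · by_cases h2 : (i : ℕ) < x + y
      · simp only [h1, h2, if_false, if_true]
        calc (ρ ^ 2) ^ 6 = (ρ ^ 3) ^ 4 := by ring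
          _ = 1 := by rw [hρ3]; ring
      · simp only [h1, h2, if_false]
        calc ρ ^ 6 = (ρ ^ 3) ^ 2 := by ring
          _ = 1 := by rw [hρ3]; ring
  have key : M₁ * M₂ = (μ * μ) • (B⁻¹ * D ^ 2 * B) := by
    simp only [M₁, M₂, Matrix.smul_mul, Matrix.mul_smul, smul_smul]
    refine congrArg (fun X => (μ * μ) • X) ?_
    calc B⁻¹ * D * B * E * (E * (B⁻¹ * D * B))
        = B⁻¹ * D * ((B * (E * E)) * B⁻¹) * D * B := by
          simp only [Matrix.mul_assoc]
      _ = B⁻¹ * D ^ 2 * B := by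
          rw [hEE, Matrix.mul_one, hBB]
          simp only [Matrix.mul_one, pow_two, Matrix.mul_assoc]
  rw [key, smul_pow]
  have hconj : (B⁻¹ * D ^ 2 * B) ^ 3 = 1 := by
    have : (B⁻¹ * D ^ 2 * B) ^ 3 = B⁻¹ * D ^ 6 * B := by
      have h1 : D ^ 6 = D ^ 2 * (D ^ 2 * D ^ 2) := by
        rw [show (6:ℕ) = 2 + (2 + 2) from rfl, pow_add, pow_add]
      rw [pow_succ, pow_succ, pow_one, h1]
      simp only [Matrix.mul_assoc]
      rw [Matrix.mul_nonsing_inv_cancel_left B _ hdet,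
        Matrix.mul_nonsing_inv_cancel_left B _ hdet]
    rw [this, hD6, Matrix.mul_one, Matrix.nonsing_inv_mul B hdet]
  rw [hconj]
  rw [← hμ]
  congr 1
  ring
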